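/- Let p ≥ 3 be prime, k = m·p^s with gcd(m,p)=1, s ≥ 0. Let P(x) = x^k + ∑_{j=1}^{k} a^{(j)} x^{k-j} with a^{(j)} ∈ ℤ_p, |a^{(k)}|_p = 1, and max_{1 ≤ j < k} |a^{(j)}|_p < p^{-2s}. Let a₀ be the first digit of a^{(k)}. Then P has a root in ℚ_p if and only if: (i) there exists ξ ∈ {1,...,p-1} with |ξ^k + a^{(k)}|_p < 1, and (ii) |a^{(k)} - a₀^{p^s}|_p < p^{-s}. -/

import Mathlib

open Finset Polynomial

set_option linter.unusedSectionVars false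
set_option linter.unusedVariables false
set_option linter.unnecessarySimpa false
set_option maxHeartbeats 1000000

section Helpers


variable {p : ℕ} [hpp : Fact p.Prime]

lemma pQ_pos : (0:ℝ) < (p:ℝ) := by exact_mod_cast hpp.out.pos

lemma pQ_one_lt : (1:ℝ) < (p:ℝ) := by exact_mod_cast hpp.out.one_lt

lemma ppow_le {a b : ℤ} (h : a ≤ b) : (p:ℝ)^a ≤ (p:ℝ)^b :=
  zpow_le_zpow_right₀ (le_of_lt pQ_one_lt) h

lemma ppow_lt {a b : ℤ} (h : a < b) : (p:ℝ)^a < (p:ℝ)^b :=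
  zpow_lt_zpow_right₀ pQ_one_lt h

lemma ppow_pos (a : ℤ) : (0:ℝ) < (p:ℝ)^a := zpow_pos pQ_pos a

lemma ppow_le_one {a : ℤ} (h : a ≤ 0) : (p:ℝ)^a ≤ 1 := by
  simpa using ppow_le (p := p) h

lemma inv_eq_ppow : ((p:ℝ))⁻¹ = (p:ℝ)^(-1 : ℤ) := by
  simp

lemma norm_two_le {x y : ℚ_[p]} {C : ℝ} (hx : ‖x‖ ≤ C) (hy : ‖y‖ ≤ C) :
    ‖x + y‖ ≤ C :=
  le_trans (Padic.nonarchimedean x y) (max_le hx hy)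

lemma norm_two_le_sub {x y : ℚ_[p]} {C : ℝ} (hx : ‖x‖ ≤ C) (hy : ‖y‖ ≤ C) :
    ‖x - y‖ ≤ C := by
  rw [sub_eq_add_neg]; exact norm_two_le hx (by simpa using hy)

lemma pnorm_sum_le {ι : Type*} (t : Finset ι) {f : ι → ℚ_[p]} {C : ℝ}
    (hC : 0 ≤ C) (h : ∀ i ∈ t, ‖f i‖ ≤ C) : ‖∑ i ∈ t, f i‖ ≤ C := by
  classical
  induction t using Finset.induction with
  | empty => simpa using hC
  | @insert a t' hx ih =>
    rw [Finset.sum_insert hx]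
    exact norm_two_le (h a (Finset.mem_insert_self a t'))
      (ih fun i hi => h i (Finset.mem_insert_of_mem hi))

/-- discreteness step -/
lemma norm_lt_to_le {x : ℚ_[p]} {n : ℤ} (h : ‖x‖ < (p:ℝ)^(n+1)) :
    ‖x‖ ≤ (p:ℝ)^n :=
  (Padic.norm_le_pow_iff_norm_lt_pow_add_one x n).2 h

lemma norm_pow_sub_pow (b c : ℚ_[p]) (hb : ‖b‖ ≤ 1) (hc : ‖c‖ ≤ 1) (n : ℕ) :
    ‖b^n - c^n‖ ≤ ‖b - c‖ := by
  induction n with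
  | zero => simp
  | succ n ih =>
    have : b^(n+1) - c^(n+1) = b * (b^n - c^n) + (b - c) * c^n := by ring
    rw [this]
    refine norm_two_le ?_ ?_
    · rw [norm_mul]
      calc ‖b‖ * ‖b^n - c^n‖ ≤ 1 * ‖b - c‖ := by
            exact mul_le_mul hb ih (norm_nonneg _) zero_le_one
        _ = ‖b - c‖ := one_mul _
    · rw [norm_mul]
      calc ‖b - c‖ * ‖c^n‖ ≤ ‖b - c‖ * 1 := by
            refine mul_le_mul_of_nonneg_left ?_ (norm_nonneg _)
            rw [norm_pow]; exact pow_le_one₀ (norm_nonneg _) hc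
        _ = ‖b - c‖ := mul_one _


lemma norm_pow_p_sub {b c : ℚ_[p]} (hb : ‖b‖ ≤ 1) (hc : ‖c‖ ≤ 1)
    (h : ‖b - c‖ ≤ (p:ℝ)⁻¹) : ‖b^p - c^p‖ ≤ (p:ℝ)⁻¹ * ‖b - c‖ := by
  have key : (∑ i ∈ range p, b ^ i * c ^ (p - 1 - i)) * (b - c) = b ^ p - c ^ p :=
    geom_sum₂_mul b c p
  set T := ∑ i ∈ range p, b ^ i * c ^ (p - 1 - i) with hT
  have hTp : ‖T‖ ≤ (p:ℝ)⁻¹ := by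
    have hsplit : T = (∑ i ∈ range p, (b ^ i - c ^ i) * c ^ (p - 1 - i)) + p * c ^ (p-1) := by
      have e1 : ∀ i ∈ range p, b ^ i * c ^ (p - 1 - i)
          = (b ^ i - c ^ i) * c ^ (p - 1 - i) + c ^ (p-1) := by
        intro i hi
        have hip : i + (p - 1 - i) = p - 1 := by
          have h1 := Finset.mem_range.1 hi; omega
        calc b ^ i * c ^ (p - 1 - i)
            = (b ^ i - c ^ i) * c ^ (p - 1 - i) + c ^ i * c ^ (p - 1 - i) := by ring
          _ = (b ^ i - c ^ i) * c ^ (p - 1 - i) + c ^ (p-1) := by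
              rw [← pow_add, hip]
      rw [hT, Finset.sum_congr rfl e1, Finset.sum_add_distrib, Finset.sum_const,
        card_range, nsmul_eq_mul]
    rw [hsplit]
    refine norm_two_le (pnorm_sum_le _ (by positivity) (fun i _ => ?_)) ?_
    · rw [norm_mul]
      calc ‖b^i - c^i‖ * ‖c^(p-1-i)‖ ≤ (p:ℝ)⁻¹ * 1 := by
            refine mul_le_mul (le_trans (norm_pow_sub_pow b c hb hc i) h) ?_ (norm_nonneg _) (by positivity)
            rw [norm_pow]; exact pow_le_one₀ (norm_nonneg _) hc
        _ = (p:ℝ)⁻¹ := mul_one _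
    · rw [norm_mul, Padic.norm_p]
      calc ((p:ℝ))⁻¹ * ‖c^(p-1)‖ ≤ (p:ℝ)⁻¹ * 1 := by
            refine mul_le_mul_of_nonneg_left ?_ (by positivity)
            rw [norm_pow]; exact pow_le_one₀ (norm_nonneg _) hc
        _ = (p:ℝ)⁻¹ := mul_one _
  calc ‖b^p - c^p‖ = ‖T‖ * ‖b - c‖ := by rw [← key, norm_mul]
    _ ≤ (p:ℝ)⁻¹ * ‖b - c‖ := mul_le_mul_of_nonneg_right hTp (norm_nonneg _)

lemma norm_ppow_sub_ppow {b c : ℚ_[p]} (hb : ‖b‖ ≤ 1) (hc : ‖c‖ ≤ 1)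
    (h : ‖b - c‖ ≤ (p:ℝ)⁻¹) (s : ℕ) :
    ‖b^(p^s) - c^(p^s)‖ ≤ (p:ℝ)^(-(s:ℤ)) * ‖b - c‖ := by
  induction s with
  | zero => simp
  | succ s ih =>
    have hb' : ‖b^(p^s)‖ ≤ 1 := by rw [norm_pow]; exact pow_le_one₀ (norm_nonneg _) hb
    have hc' : ‖c^(p^s)‖ ≤ 1 := by rw [norm_pow]; exact pow_le_one₀ (norm_nonneg _) hc
    have h' : ‖b^(p^s) - c^(p^s)‖ ≤ (p:ℝ)⁻¹ := by
      refine le_trans ih (le_trans (mul_le_mul (ppow_le_one (by omega)) h (norm_nonneg _) zero_le_one) (by simp))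
    have := norm_pow_p_sub hb' hc' h'
    rw [← pow_mul, ← pow_mul, ← pow_succ] at this
    refine le_trans this ?_
    refine le_trans (mul_le_mul_of_nonneg_left ih (by positivity)) ?_
    rw [← mul_assoc, inv_eq_ppow, ← zpow_add₀ (ne_of_gt pQ_pos)]
    refine mul_le_mul_of_nonneg_right (ppow_le (by push_cast; omega)) (norm_nonneg _)

/-- Fermat: `‖b^p - b‖ ≤ 1/p` for `‖b‖ ≤ 1`. -/
lemma norm_pow_p_sub_self {b : ℚ_[p]} (hb : ‖b‖ ≤ 1) : ‖b^p - b‖ ≤ (p:ℝ)⁻¹ := by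
  set b' : ℤ_[p] := ⟨b, hb⟩ with hb'
  have : b'^p - b' ∈ IsLocalRing.maximalIdeal ℤ_[p] := by
    rw [← PadicInt.ker_toZMod, RingHom.mem_ker, map_sub, map_pow, ZMod.pow_card, sub_self]
  rw [PadicInt.maximalIdeal_eq_span_p, Ideal.mem_span_singleton,
    ← PadicInt.norm_lt_one_iff_dvd] at this
  have hnorm : ‖b' ^ p - b'‖ = ‖b ^ p - b‖ := by
    rw [PadicInt.norm_def]; push_cast; rfl
  rw [hnorm] at this
  rw [inv_eq_ppow]
  exact norm_lt_to_le (by simpa using this)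

lemma norm_ppow_sub_self {b : ℚ_[p]} (hb : ‖b‖ ≤ 1) (s : ℕ) :
    ‖b^(p^s) - b‖ ≤ (p:ℝ)⁻¹ := by
  induction s with
  | zero =>
    simp only [pow_zero, pow_one, sub_self, norm_zero]
    positivity
  | succ s ih =>
    have hb' : ‖b^(p^s)‖ ≤ 1 := by rw [norm_pow]; exact pow_le_one₀ (norm_nonneg _) hb
    have h1 : ‖(b^(p^s))^p - b^p‖ ≤ (p:ℝ)⁻¹ := by
      refine le_trans (norm_pow_p_sub hb' hb ih) ?_
      calc (p:ℝ)⁻¹ * ‖b^(p^s) - b‖ ≤ (p:ℝ)⁻¹ * 1 :=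
            mul_le_mul_of_nonneg_left (le_trans ih (inv_le_one_of_one_le₀ (le_of_lt pQ_one_lt))) (by positivity)
        _ = _ := mul_one _
    have h2 := norm_pow_p_sub_self hb
    have : b^(p^(s+1)) - b = ((b^(p^s))^p - b^p) + (b^p - b) := by
      rw [← pow_mul, ← pow_succ]; ring
    rw [this]
    exact norm_two_le h1 h2


/-- norm of p-divisible nat binomials -/
lemma norm_choose_le {i : ℕ} (hi : i ≠ 0) (hip : i < p) : ‖((p.choose i : ℕ) : ℚ_[p])‖ ≤ (p:ℝ)⁻¹ := by
  have hdvd : (p:ℤ) ∣ (p.choose i : ℤ) := by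
    exact_mod_cast Int.natCast_dvd_natCast.2 (hpp.out.dvd_choose_self hi hip)
  have := (Padic.norm_intCast_lt_one_iff (p := p) (k := (p.choose i : ℤ))).2 hdvd
  rw [inv_eq_ppow]
  refine norm_lt_to_le ?_
  simpa using this

/-- Lemma E -/
lemma pow_p_one_add (hp3 : 3 ≤ p) {e : ℚ_[p]} {j : ℕ} (hj : 1 ≤ j)
    (he : ‖e‖ ≤ (p:ℝ)^(-(j:ℤ))) :
    ‖(1 + e)^p - 1 - p * e‖ ≤ (p:ℝ)^(-(2*(j:ℤ)+1)) := by
  have he1 : ‖e‖ ≤ 1 := le_trans he (ppow_le_one (by omega))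
  have hexp : (1 + e)^p = ∑ i ∈ range (p+1), e ^ i * (p.choose i : ℚ_[p]) := by
    rw [add_comm]
    rw [add_pow]
    exact Finset.sum_congr rfl (fun i hi => by rw [one_pow]; ring)
  have h0p : 0 < p + 1 := by omega
  have h1p : 1 < p + 1 := by omega
  rw [Finset.range_eq_Ico, Finset.sum_eq_sum_Ico_succ_bot h0p, Finset.sum_eq_sum_Ico_succ_bot h1p] at hexp
  simp only [pow_zero, one_mul, Nat.choose_zero_right, Nat.choose_one_right, pow_one, Nat.cast_one, mul_one] at hexp
  have : (1 + e)^p - 1 - p * e = ∑ i ∈ Ico 2 (p+1), e ^ i * (p.choose i : ℚ_[p]) := by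
    rw [hexp]; ring
  rw [this]
  refine pnorm_sum_le _ (le_of_lt (ppow_pos _)) (fun i hi => ?_)
  obtain ⟨hi2, hip⟩ := Finset.mem_Ico.1 hi
  rw [norm_mul, norm_pow]
  rcases lt_or_eq_of_le (Nat.lt_succ_iff.1 hip) with hlt | heq
  · -- i < p : use p ∣ choose
    calc ‖e‖ ^ i * ‖((p.choose i : ℕ) : ℚ_[p])‖
        ≤ ((p:ℝ)^(-(j:ℤ)))^2 * (p:ℝ)⁻¹ := by
          refine mul_le_mul ?_ (norm_choose_le (by omega) hlt) (norm_nonneg _) (by positivity)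
          calc ‖e‖ ^ i ≤ ‖e‖ ^ 2 := pow_le_pow_of_le_one (norm_nonneg _) he1 hi2
            _ ≤ ((p:ℝ)^(-(j:ℤ)))^2 := by
                refine pow_le_pow_left₀ (norm_nonneg _) he 2
      _ = (p:ℝ)^(-2*(j:ℤ)-1) := by
          rw [inv_eq_ppow, ← zpow_natCast ((p:ℝ)^(-(j:ℤ))), ← zpow_mul, ← zpow_add₀ (ne_of_gt pQ_pos)]
          ring_nf
      _ ≤ (p:ℝ)^(-(2*(j:ℤ)+1)) := ppow_le (by omega)
  · -- i = p : choose = 1, ‖e‖^p ≤ p^{-pj}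
    rw [heq]
    simp only [Nat.choose_self, Nat.cast_one, norm_one, mul_one]
    calc ‖e‖ ^ p ≤ ((p:ℝ)^(-(j:ℤ)))^p := pow_le_pow_left₀ (norm_nonneg _) he p
      _ = (p:ℝ)^(-(j:ℤ)*p) := by rw [← zpow_natCast ((p:ℝ)^(-(j:ℤ))), ← zpow_mul]
      _ ≤ (p:ℝ)^(-(2*(j:ℤ)+1)) := by
          refine ppow_le ?_
          have h3 : 3 ≤ (p:ℤ) := by exact_mod_cast hp3
          have h1 : (1:ℤ) ≤ (j:ℤ) := by exact_mod_cast hj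
          nlinarith


/-- Lemma F -/
lemma pow_ppow_one_add (hp3 : 3 ≤ p) (s : ℕ) {e : ℚ_[p]} {j : ℕ} (hj : 1 ≤ j)
    (he : ‖e‖ ≤ (p:ℝ)^(-(j:ℤ))) :
    ‖(1 + e)^(p^s) - 1 - (p:ℚ_[p])^s * e‖ ≤ (p:ℝ)^(-((s:ℤ) + 2*(j:ℤ))) := by
  induction s with
  | zero => simp; positivity
  | succ s ih =>
    set c := (1 + e)^(p^s) with hc
    set f := c - 1 with hf
    have hfe : f - (p:ℚ_[p])^s * e = c - 1 - (p:ℚ_[p])^s * e := by rw [hf]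
    have ihf : ‖f - (p:ℚ_[p])^s * e‖ ≤ (p:ℝ)^(-((s:ℤ) + 2*(j:ℤ))) := by rw [hfe]; exact ih
    have hinv : ((p:ℝ)⁻¹)^s = (p:ℝ)^(-(s:ℤ)) := by
      rw [inv_eq_ppow, ← zpow_natCast ((p:ℝ)^(-1:ℤ)), ← zpow_mul]; ring_nf
    have hpse : ‖(p:ℚ_[p])^s * e‖ ≤ (p:ℝ)^(-((s:ℤ)+(j:ℤ))) := by
      rw [norm_mul, norm_pow, Padic.norm_p, hinv, neg_add,
        zpow_add₀ (ne_of_gt pQ_pos)]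
      exact mul_le_mul_of_nonneg_left he (le_of_lt (ppow_pos _))
    have hfnorm : ‖f‖ ≤ (p:ℝ)^(-((s:ℤ)+(j:ℤ))) := by
      have : f = (f - (p:ℚ_[p])^s * e) + (p:ℚ_[p])^s * e := by ring
      rw [this]
      refine norm_two_le (le_trans ihf (ppow_le (by omega))) hpse
    have hsj1 : 1 ≤ s + j := by omega
    have he2 : ‖f‖ ≤ (p:ℝ)^(-((s+j:ℕ):ℤ)) := by rw [Nat.cast_add]; exact hfnorm
    have hE := pow_p_one_add hp3 hsj1 he2
    -- (1+f)^p = c^p = (1+e)^(p^(s+1))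
    have hcp : (1 + f)^p = (1 + e)^(p^(s+1)) := by
      rw [hf, hc]
      rw [add_sub_cancel, ← pow_mul, pow_succ]
    have key : (1 + e)^(p^(s+1)) - 1 - (p:ℚ_[p])^(s+1) * e
        = ((1 + f)^p - 1 - (p:ℚ_[p]) * f) + (p:ℚ_[p]) * (f - (p:ℚ_[p])^s * e) := by
      rw [hcp]; ring
    rw [key]
    refine norm_two_le ?_ ?_
    · refine le_trans hE (ppow_le ?_)
      push_cast
      omega
    · rw [norm_mul, Padic.norm_p, inv_eq_ppow]
      refine le_trans (mul_le_mul_of_nonneg_left ihf (le_of_lt (ppow_pos _))) ?_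
      rw [← zpow_add₀ (ne_of_gt pQ_pos)]
      refine ppow_le (by push_cast; omega)

/-- Lemma G : approximate p^s-th roots of 1-units -/
lemma approx_ppow_root (hp3 : 3 ≤ p) (s : ℕ) :
    ∀ n j : ℕ, 1 ≤ j → s + 1 ≤ j + n → ∀ v : ℚ_[p], ‖v - 1‖ ≤ (p:ℝ)^(-((s:ℤ)+(j:ℤ))) →
    ∃ y : ℚ_[p], ‖y - 1‖ ≤ (p:ℝ)⁻¹ ∧ ‖y^(p^s) - v‖ ≤ (p:ℝ)^(-(2*(s:ℤ)+1)) := by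
  intro n
  induction n with
  | zero =>
    intro j hj hsj v hv
    -- j ≥ s + 1 : one step suffices
    set e := (v - 1) / (p:ℚ_[p])^s with he
    have hps : ((p:ℚ_[p])^s) ≠ 0 := by
      refine pow_ne_zero _ ?_
      exact_mod_cast (Nat.cast_ne_zero (R := ℚ_[p])).2 (ne_of_gt hpp.out.pos)
    have hpse : (p:ℚ_[p])^s * e = v - 1 := by
      rw [he, mul_div_cancel₀ _ hps]
    have henorm : ‖e‖ ≤ (p:ℝ)^(-(j:ℤ)) := by
      rw [he, norm_div, norm_pow, Padic.norm_p, inv_eq_ppow, ← zpow_natCast, ← zpow_mul]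
      rw [div_le_iff₀ (by positivity)]
      calc ‖v - 1‖ ≤ (p:ℝ)^(-((s:ℤ)+(j:ℤ))) := hv
        _ = (p:ℝ)^(-(j:ℤ)) * (p:ℝ)^(-1*(s:ℤ)) := by
            rw [← zpow_add₀ (ne_of_gt pQ_pos)]; ring_nf
    refine ⟨1 + e, ?_, ?_⟩
    · rw [add_sub_cancel_left]
      refine le_trans henorm (le_trans (ppow_le (a := -(j:ℤ)) (b := -1) (by omega)) (le_of_eq ?_))
      rw [inv_eq_ppow]
    · have hF := pow_ppow_one_add hp3 s hj henorm
      have : (1 + e)^(p^s) - v = (1 + e)^(p^s) - 1 - (p:ℚ_[p])^s * e := by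
        rw [hpse]; ring
      rw [this]
      refine le_trans hF (ppow_le ?_)
      have : (s:ℤ) + 1 ≤ (j:ℤ) := by exact_mod_cast (by omega : s + 1 ≤ j)
      omega
  | succ n ih =>
    intro j hj hsj v hv
    set e := (v - 1) / (p:ℚ_[p])^s with he
    have hps : ((p:ℚ_[p])^s) ≠ 0 := by
      refine pow_ne_zero _ ?_
      exact_mod_cast (Nat.cast_ne_zero (R := ℚ_[p])).2 (ne_of_gt hpp.out.pos)
    have hpse : (p:ℚ_[p])^s * e = v - 1 := by
      rw [he, mul_div_cancel₀ _ hps]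
    have henorm : ‖e‖ ≤ (p:ℝ)^(-(j:ℤ)) := by
      rw [he, norm_div, norm_pow, Padic.norm_p, inv_eq_ppow, ← zpow_natCast, ← zpow_mul]
      rw [div_le_iff₀ (by positivity)]
      calc ‖v - 1‖ ≤ (p:ℝ)^(-((s:ℤ)+(j:ℤ))) := hv
        _ = (p:ℝ)^(-(j:ℤ)) * (p:ℝ)^(-1*(s:ℤ)) := by
            rw [← zpow_add₀ (ne_of_gt pQ_pos)]; ring_nf
    set y₁ := 1 + e with hy₁
    set r := y₁^(p^s) - v with hr
    have hrnorm : ‖r‖ ≤ (p:ℝ)^(-((s:ℤ)+2*(j:ℤ))) := by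
      have hF := pow_ppow_one_add hp3 s hj henorm
      have : r = (1 + e)^(p^s) - 1 - (p:ℚ_[p])^s * e := by
        rw [hr, hy₁, hpse]; ring
      rw [this]; exact hF
    have hy₁norm : ‖y₁‖ ≤ 1 := by
      rw [hy₁]
      refine norm_two_le (by simp) (le_trans henorm (ppow_le_one (by omega)))
    have hvnorm : ‖v‖ = 1 := by
      have h1 : ‖v - 1‖ < 1 := lt_of_le_of_lt hv (by
        calc (p:ℝ)^(-((s:ℤ)+(j:ℤ))) < (p:ℝ)^(0:ℤ) := ppow_lt (by omega)
          _ = 1 := by simp)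
      have : v = (v - 1) + 1 := by ring
      rw [this, Padic.add_eq_max_of_ne (by rw [norm_one]; exact ne_of_lt h1), norm_one]
      simp [le_of_lt h1]
    have hvr : ‖v + r‖ = 1 := by
      have hr1 : ‖r‖ < 1 := lt_of_le_of_lt hrnorm (by
        calc (p:ℝ)^(-((s:ℤ)+2*(j:ℤ))) < (p:ℝ)^(0:ℤ) := ppow_lt (by omega)
          _ = 1 := by simp)
      rw [Padic.add_eq_max_of_ne (by rw [hvnorm]; exact ne_of_gt hr1), hvnorm]
      simp [le_of_lt hr1]
    have hvr0 : v + r ≠ 0 := by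
      intro h0; rw [h0] at hvr; simpa using hvr
    -- recurse on v' = v / (v + r), with j' = min (2j) (s+1)
    set j' := min (2*j) (s+1) with hj'
    set v' := v / (v + r) with hv'
    have hv'1 : ‖v' - 1‖ ≤ (p:ℝ)^(-((s:ℤ)+(j':ℤ))) := by
      have : v' - 1 = -r / (v + r) := by
        rw [hv']; field_simp
        ring
      rw [this, norm_div, norm_neg, hvr, div_one]
      refine le_trans hrnorm (ppow_le ?_)
      have : (j':ℤ) ≤ 2*(j:ℤ) := by
        have : j' ≤ 2*j := min_le_left _ _
        exact_mod_cast this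
      omega
    have hrec := ih j' (by omega) (by omega) v' hv'1
    obtain ⟨y₂, hy₂1, hy₂2⟩ := hrec
    refine ⟨y₁ * y₂, ?_, ?_⟩
    · have : y₁ * y₂ - 1 = y₁ * (y₂ - 1) + (y₁ - 1) := by ring
      rw [this]
      refine norm_two_le ?_ ?_
      · rw [norm_mul]
        calc ‖y₁‖ * ‖y₂ - 1‖ ≤ 1 * (p:ℝ)⁻¹ := mul_le_mul hy₁norm hy₂1 (norm_nonneg _) zero_le_one
          _ = (p:ℝ)⁻¹ := one_mul _
      · rw [hy₁, add_sub_cancel_left]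
        refine le_trans henorm (le_trans (ppow_le (a := -(j:ℤ)) (b := -1) (by omega)) (le_of_eq ?_))
        rw [inv_eq_ppow]
    · have hfac : (y₁ * y₂)^(p^s) - v = (v + r) * (y₂^(p^s) - v') := by
        rw [mul_pow]
        have h1 : y₁^(p^s) = v + r := by rw [hr]; ring
        rw [h1, hv']
        field_simp
      rw [hfac, norm_mul, hvr, one_mul]
      exact hy₂2


lemma coe_sum_padic (n : Finset ℕ) (f : ℕ → ℤ_[p]) :
    ((∑ i ∈ n, f i : ℤ_[p]) : ℚ_[p]) = ∑ i ∈ n, (f i : ℚ_[p]) :=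
  map_sum (PadicInt.Coe.ringHom) f n

lemma pinv_pow' (s : ℕ) : ((p:ℝ)⁻¹)^s = (p:ℝ)^(-(s:ℤ)) := by
  rw [inv_eq_ppow, ← zpow_natCast ((p:ℝ)^(-1:ℤ)), ← zpow_mul]; ring_nf

lemma norm_natCast_one_of_not_dvd {n : ℕ} (h : ¬ p ∣ n) : ‖(n : ℚ_[p])‖ = 1 := by
  have hle : ‖(n : ℚ_[p])‖ ≤ 1 := by
    have := Padic.norm_int_le_one (p := p) (n : ℤ)
    push_cast at this; exact this
  rcases lt_or_eq_of_le hle with hlt | heq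
  · exfalso
    have : (p:ℤ) ∣ (n:ℤ) := by
      refine (Padic.norm_intCast_lt_one_iff (p := p) (k := (n : ℤ))).1 ?_
      push_cast; exact hlt
    exact h (by exact_mod_cast this)
  · exact heq

lemma norm_natCast_k (m s : ℕ) (hm : ¬ p ∣ m) :
    ‖((m * p^s : ℕ) : ℚ_[p])‖ = (p:ℝ)^(-(s:ℤ)) := by
  push_cast
  rw [norm_mul, norm_pow, Padic.norm_p, norm_natCast_one_of_not_dvd hm, one_mul,
    pinv_pow']

lemma norm_eq_one_of_norm_sub_lt {x : ℚ_[p]} {c : ℚ_[p]} (hc : ‖c‖ = 1) (h : ‖x - c‖ < 1) :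
    ‖x‖ = 1 := by
  have : x = (x - c) + c := by ring
  rw [this, Padic.add_eq_max_of_ne (by rw [hc]; exact ne_of_lt h), hc]
  simp [le_of_lt h]

end Helpers


lemma fwd_dir (p : ℕ) [hpp : Fact p.Prime] (hp : 3 ≤ p)
    (m s k : ℕ) (hm : Nat.Coprime m p) (hkdef : k = m * p ^ s)
    (a : ℕ → ℚ_[p]) (haint : ∀ j, 1 ≤ j → j ≤ k → ‖a j‖ ≤ 1)
    (hak : ‖a k‖ = 1)
    (hsmall : ∀ j, 1 ≤ j → j < k → ‖a j‖ < (p : ℝ) ^ (-(2 * s : ℤ)))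
    (a₀ : ℕ) (ha₀ : 1 ≤ a₀) (ha₀' : a₀ ≤ p - 1)
    (hclose : ‖a k - (a₀ : ℚ_[p])‖ < 1)
    (x : ℚ_[p]) (hx : x ^ k + ∑ j ∈ Finset.Icc 1 k, a j * x ^ (k - j) = 0) :
    ((∃ ξ : ℕ, 1 ≤ ξ ∧ ξ ≤ p - 1 ∧ ‖(ξ : ℚ_[p]) ^ k + a k‖ < 1) ∧
        ‖a k - (a₀ : ℚ_[p]) ^ (p ^ s)‖ < (p : ℝ) ^ (-(s : ℤ))) := by
  have hm0 : m ≠ 0 := by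
    rintro rfl
    simp [Nat.Coprime] at hm
    omega
  have hk1 : 1 ≤ k := by
    rw [hkdef]
    exact Nat.one_le_iff_ne_zero.2 (Nat.mul_ne_zero hm0 (pow_ne_zero _ (by omega)))
  obtain ⟨k', hkk'⟩ : ∃ k', k = k' + 1 := ⟨k - 1, by omega⟩
  have hsplit : ∀ f : ℕ → ℚ_[p], ∑ j ∈ Icc 1 k, f j = ∑ j ∈ Icc 1 k', f j + f k := by
    intro f
    rw [hkk']
    exact Finset.sum_Icc_succ_top (by omega) f
  have hsmall' : ∀ j, 1 ≤ j → j < k → ‖a j‖ ≤ (p:ℝ)^(-(2*(s:ℤ)+1)) := by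
    intro j h1 h2
    refine norm_lt_to_le ?_
    have : (-(2*(s:ℤ)+1) + 1) = -(2*s:ℤ) := by ring
    rw [this]
    exact hsmall j h1 h2
  -- step 1 : ‖x‖ = 1
  have hxsum : x ^ k + (∑ j ∈ Icc 1 k', a j * x ^ (k - j) + a k) = 0 := by
    have h := hsplit (fun j => a j * x ^ (k - j))
    simp only [Nat.sub_self, pow_zero, mul_one] at h
    rw [← h]
    exact hx
  have hxnorm : ‖x‖ = 1 := by
    rcases lt_trichotomy ‖x‖ 1 with hlt | heq | hgt
    · exfalso
      have hax : a k = -(x ^ k + ∑ j ∈ Icc 1 k', a j * x ^ (k - j)) := by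
        linear_combination hxsum
      have hcon : ‖a k‖ ≤ ‖x‖ := by
        rw [hax, norm_neg]
        refine norm_two_le ?_ ?_
        · rw [norm_pow]
          calc ‖x‖^k ≤ ‖x‖^1 := pow_le_pow_of_le_one (norm_nonneg _) (le_of_lt hlt) hk1
            _ = ‖x‖ := pow_one _
        · refine pnorm_sum_le _ (norm_nonneg _) (fun j hj => ?_)
          obtain ⟨hj1, hj2⟩ := Finset.mem_Icc.1 hj
          rw [norm_mul]
          calc ‖a j‖ * ‖x^(k-j)‖ ≤ 1 * ‖x‖ := by
                refine mul_le_mul (haint j hj1 (by omega)) ?_ (norm_nonneg _) zero_le_one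
                rw [norm_pow]
                calc ‖x‖^(k-j) ≤ ‖x‖^1 :=
                      pow_le_pow_of_le_one (norm_nonneg _) (le_of_lt hlt) (by omega)
                  _ = ‖x‖ := pow_one _
            _ = ‖x‖ := one_mul _
      rw [hak] at hcon
      exact absurd (lt_of_le_of_lt hcon hlt) (lt_irrefl _)
    · exact heq
    · exfalso
      have hax : x ^ k = -(∑ j ∈ Icc 1 k, a j * x ^ (k - j)) := by
        linear_combination hx
      have hcon : ‖x‖^k ≤ ‖x‖^k' := by
        rw [← norm_pow, hax, norm_neg]
        refine pnorm_sum_le _ (by positivity) (fun j hj => ?_)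
        obtain ⟨hj1, hj2⟩ := Finset.mem_Icc.1 hj
        rw [norm_mul, norm_pow]
        calc ‖a j‖ * ‖x‖^(k-j) ≤ 1 * ‖x‖^k' := by
              refine mul_le_mul (haint j hj1 hj2) ?_ (by positivity) zero_le_one
              exact pow_le_pow_right₀ (le_of_lt hgt) (by omega)
          _ = ‖x‖^k' := one_mul _
      have : ‖x‖^k' < ‖x‖^k := pow_lt_pow_right₀ hgt (by omega)
      exact absurd (lt_of_le_of_lt hcon this) (lt_irrefl _)
  have hx1 : ‖x‖ ≤ 1 := le_of_eq hxnorm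
  -- step 2
  have hxk : ‖x ^ k + a k‖ ≤ (p:ℝ)^(-(2*(s:ℤ)+1)) := by
    have hax : x ^ k + a k = -(∑ j ∈ Icc 1 k', a j * x ^ (k - j)) := by
      linear_combination hxsum
    rw [hax, norm_neg]
    refine pnorm_sum_le _ (le_of_lt (ppow_pos _)) (fun j hj => ?_)
    obtain ⟨hj1, hj2⟩ := Finset.mem_Icc.1 hj
    rw [norm_mul]
    calc ‖a j‖ * ‖x^(k-j)‖ ≤ (p:ℝ)^(-(2*(s:ℤ)+1)) * 1 := by
          refine mul_le_mul (hsmall' j hj1 (by omega)) ?_ (norm_nonneg _) (le_of_lt (ppow_pos _))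
          rw [norm_pow]; exact pow_le_one₀ (norm_nonneg _) hx1
      _ = _ := mul_one _
  constructor
  · -- (i)
    set xZ : ℤ_[p] := ⟨x, hx1⟩ with hxZ
    set ξ := PadicInt.zmodRepr xZ with hξ
    have hξlt : ξ < p := PadicInt.zmodRepr_lt_p xZ
    have hmem := PadicInt.sub_zmodRepr_mem xZ
    rw [PadicInt.maximalIdeal_eq_span_p, Ideal.mem_span_singleton,
      ← PadicInt.norm_lt_one_iff_dvd] at hmem
    have hxξ : ‖x - (ξ : ℚ_[p])‖ < 1 := by
      have : ((xZ - (ξ : ℤ_[p]) : ℤ_[p]) : ℚ_[p]) = x - (ξ : ℚ_[p]) := by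
        push_cast [hxZ]
        rfl
      rw [PadicInt.norm_def, this] at hmem
      exact hmem
    have hξ0 : ξ ≠ 0 := by
      rintro h0
      rw [h0] at hxξ
      simp only [Nat.cast_zero, sub_zero] at hxξ
      rw [hxnorm] at hxξ
      exact absurd hxξ (lt_irrefl _)
    have hxξ' : ‖x - (ξ : ℚ_[p])‖ ≤ (p:ℝ)⁻¹ := by
      rw [inv_eq_ppow]
      exact norm_lt_to_le (by simpa using hxξ)
    refine ⟨ξ, by omega, by omega, ?_⟩
    have h1 : ‖(ξ:ℚ_[p])^k - x^k‖ ≤ (p:ℝ)⁻¹ := by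
      refine le_trans (norm_pow_sub_pow _ _ ?_ hx1 k) ?_
      · have : ¬ p ∣ ξ := by
          intro hdvd
          have := Nat.le_of_dvd (by omega) hdvd
          omega
        rw [norm_natCast_one_of_not_dvd this]
      · rw [← norm_neg, neg_sub]
        exact hxξ'
    have h2 : ‖(ξ:ℚ_[p])^k + a k‖ ≤ (p:ℝ)⁻¹ := by
      have : (ξ:ℚ_[p])^k + a k = ((ξ:ℚ_[p])^k - x^k) + (x^k + a k) := by ring
      rw [this]
      refine norm_two_le h1 (le_trans hxk ?_)
      rw [inv_eq_ppow]
      exact ppow_le (by omega)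
    refine lt_of_le_of_lt h2 ?_
    rw [inv_eq_ppow]
    calc (p:ℝ)^(-1:ℤ) < (p:ℝ)^(0:ℤ) := ppow_lt (by omega)
      _ = 1 := by simp
  · -- (ii)
    set y := x^m with hy
    have hy1 : ‖y‖ ≤ 1 := by rw [hy, norm_pow]; exact pow_le_one₀ (norm_nonneg _) hx1
    have hxky : x^k = y^(p^s) := by rw [hy, ← pow_mul, ← hkdef]
    have ha₀n : ‖(a₀ : ℚ_[p])‖ = 1 := by
      refine norm_natCast_one_of_not_dvd ?_
      intro hdvd
      have := Nat.le_of_dvd (by omega) hdvd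
      omega
    have h2 : ‖(a₀:ℚ_[p]) - a k‖ ≤ (p:ℝ)⁻¹ := by
      rw [inv_eq_ppow]
      refine norm_lt_to_le ?_
      rw [← norm_neg, neg_sub]
      simpa using hclose
    have h3 : ‖x^k - y‖ ≤ (p:ℝ)⁻¹ := by
      rw [hxky]
      exact norm_ppow_sub_self hy1 s
    have h1 : ‖a k + x^k‖ ≤ (p:ℝ)⁻¹ := by
      rw [add_comm]
      refine le_trans hxk ?_
      rw [inv_eq_ppow]
      exact ppow_le (by omega)
    have h4 : ‖(a₀:ℚ_[p]) - (-y)‖ ≤ (p:ℝ)⁻¹ := by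
      have : (a₀:ℚ_[p]) - (-y) = ((a₀:ℚ_[p]) - a k) + (a k + x^k) + (y - x^k) := by ring
      rw [this]
      refine norm_two_le (norm_two_le h2 h1) ?_
      rw [← norm_neg, neg_sub]
      exact h3
    have hLs := norm_ppow_sub_ppow (b := (a₀:ℚ_[p])) (c := -y) (le_of_eq ha₀n)
      (by rw [norm_neg]; exact hy1) h4 s
    have hodd : Odd (p^s) := Odd.pow (hpp.out.odd_of_ne_two (by omega))
    have hnegy : (-y)^(p^s) = -y^(p^s) := Odd.neg_pow hodd y
    have h5 : ‖(a₀:ℚ_[p])^(p^s) + x^k‖ ≤ (p:ℝ)^(-((s:ℤ)+1)) := by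
      have he : (a₀:ℚ_[p])^(p^s) + x^k = (a₀:ℚ_[p])^(p^s) - (-y)^(p^s) := by
        rw [hnegy, hxky]; ring
      rw [he]
      refine le_trans hLs ?_
      calc (p:ℝ)^(-(s:ℤ)) * ‖(a₀:ℚ_[p]) - (-y)‖ ≤ (p:ℝ)^(-(s:ℤ)) * (p:ℝ)⁻¹ :=
            mul_le_mul_of_nonneg_left h4 (le_of_lt (ppow_pos _))
        _ = (p:ℝ)^(-((s:ℤ)+1)) := by
            rw [inv_eq_ppow, ← zpow_add₀ (ne_of_gt pQ_pos)]; ring_nf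
    have h6 : ‖a k - (a₀:ℚ_[p])^(p^s)‖ ≤ (p:ℝ)^(-((s:ℤ)+1)) := by
      have : a k - (a₀:ℚ_[p])^(p^s) = (a k + x^k) - ((a₀:ℚ_[p])^(p^s) + x^k) := by ring
      rw [this]
      refine norm_two_le_sub
        (le_trans ?_ (ppow_le (a := -(2*(s:ℤ)+1)) (b := -((s:ℤ)+1)) (by omega))) h5
      rw [add_comm]
      exact hxk
    refine lt_of_le_of_lt h6 (ppow_lt (by omega))

lemma bwd_dir (p : ℕ) [hpp : Fact p.Prime] (hp : 3 ≤ p)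
    (m s k : ℕ) (hm : Nat.Coprime m p) (hkdef : k = m * p ^ s)
    (a : ℕ → ℚ_[p]) (haint : ∀ j, 1 ≤ j → j ≤ k → ‖a j‖ ≤ 1)
    (hak : ‖a k‖ = 1)
    (hsmall : ∀ j, 1 ≤ j → j < k → ‖a j‖ < (p : ℝ) ^ (-(2 * s : ℤ)))
    (a₀ : ℕ) (ha₀ : 1 ≤ a₀) (ha₀' : a₀ ≤ p - 1)
    (ξ : ℕ) (hξ1 : 1 ≤ ξ) (hξ2 : ξ ≤ p - 1) (hξ3 : ‖(ξ : ℚ_[p]) ^ k + a k‖ < 1)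
    (hii : ‖a k - (a₀ : ℚ_[p]) ^ (p ^ s)‖ < (p : ℝ) ^ (-(s : ℤ))) :
    ∃ x : ℚ_[p], x ^ k + ∑ j ∈ Finset.Icc 1 k, a j * x ^ (k - j) = 0 := by
  have hm0 : m ≠ 0 := by
    rintro rfl
    simp [Nat.Coprime] at hm
    omega
  have hmd : ¬ p ∣ m := (Nat.Prime.coprime_iff_not_dvd hpp.out).1 hm.symm
  have hk1 : 1 ≤ k := by
    rw [hkdef]
    exact Nat.one_le_iff_ne_zero.2 (Nat.mul_ne_zero hm0 (pow_ne_zero _ (by omega)))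
  obtain ⟨k', hkk'⟩ : ∃ k', k = k' + 1 := ⟨k - 1, by omega⟩
  have hsplitZ : ∀ f : ℕ → ℚ_[p], ∑ j ∈ Icc 1 k, f j = ∑ j ∈ Icc 1 k', f j + f k := by
    intro f
    rw [hkk']
    exact Finset.sum_Icc_succ_top (by omega) f
  have hsmall' : ∀ j, 1 ≤ j → j < k → ‖a j‖ ≤ (p:ℝ)^(-(2*(s:ℤ)+1)) := by
    intro j h1 h2
    refine norm_lt_to_le ?_
    have : (-(2*(s:ℤ)+1) + 1) = -(2*s:ℤ) := by ring
    rw [this]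
    exact hsmall j h1 h2
  have ha₀n : ‖(a₀ : ℚ_[p])‖ = 1 := by
    refine norm_natCast_one_of_not_dvd ?_
    intro hdvd
    have := Nat.le_of_dvd (by omega) hdvd
    omega
  have ha₀pn : ‖((a₀ : ℚ_[p])^(p^s))‖ = 1 := by rw [norm_pow, ha₀n, one_pow]
  have ha₀p0 : ((a₀ : ℚ_[p])^(p^s)) ≠ 0 := by
    intro h0; rw [h0] at ha₀pn; simp at ha₀pn
  have hii' : ‖a k - (a₀ : ℚ_[p]) ^ (p ^ s)‖ ≤ (p:ℝ)^(-((s:ℤ)+1)) := by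
    refine norm_lt_to_le ?_
    have : (-((s:ℤ)+1) + 1) = -(s:ℤ) := by ring
    rw [this]
    exact hii
  -- v and its approximate p^s-th root
  set v := a k / ((a₀ : ℚ_[p])^(p^s)) with hv
  have hakv : a k = ((a₀ : ℚ_[p])^(p^s)) * v := by
    rw [hv, mul_div_cancel₀ _ ha₀p0]
  have hv1 : ‖v - 1‖ ≤ (p:ℝ)^(-((s:ℤ)+1)) := by
    have : v - 1 = (a k - (a₀ : ℚ_[p])^(p^s)) / ((a₀ : ℚ_[p])^(p^s)) := by
      rw [hv, div_sub_one ha₀p0]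
    rw [this, norm_div, ha₀pn, div_one]
    exact hii'
  obtain ⟨y, hy1, hy2⟩ := approx_ppow_root hp s s 1 le_rfl (by omega) v
    (by push_cast; exact hv1)
  have hy1lt : ‖y - 1‖ < 1 := lt_of_le_of_lt hy1 (by
    rw [inv_eq_ppow]
    calc (p:ℝ)^(-1:ℤ) < (p:ℝ)^(0:ℤ) := ppow_lt (by omega)
      _ = 1 := by simp)
  have hyn : ‖y‖ = 1 := norm_eq_one_of_norm_sub_lt (c := 1) norm_one (by simpa using hy1lt)
  set z := -(a₀ : ℚ_[p]) * y with hz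
  have hzn : ‖z‖ = 1 := by rw [hz, norm_mul, norm_neg, ha₀n, hyn, one_mul]
  -- starting point for m-th root
  have hξd : ¬ p ∣ ξ := by
    intro hdvd
    have := Nat.le_of_dvd (by omega) hdvd
    omega
  have hξn : ‖(ξ:ℚ_[p])‖ = 1 := norm_natCast_one_of_not_dvd hξd
  set t₀ := (ξ:ℚ_[p])^(p^s) with ht₀
  have ht₀n : ‖t₀‖ = 1 := by rw [ht₀, norm_pow, hξn, one_pow]
  have ht₀m : t₀^m = (ξ:ℚ_[p])^k := by
    rw [ht₀, ← pow_mul, mul_comm, ← hkdef]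
  have hξk : ‖(ξ:ℚ_[p])^k + a k‖ ≤ (p:ℝ)⁻¹ := by
    rw [inv_eq_ppow]
    exact norm_lt_to_le (by simpa using hξ3)
  have hFermA : ‖(a₀:ℚ_[p])^(p^s) - (a₀:ℚ_[p])‖ ≤ (p:ℝ)⁻¹ :=
    norm_ppow_sub_self (le_of_eq ha₀n) s
  have ht₀z : ‖t₀^m - z‖ ≤ (p:ℝ)⁻¹ := by
    have hiile : ‖(a₀:ℚ_[p])^(p^s) - a k‖ ≤ (p:ℝ)⁻¹ := by
      rw [← norm_neg, neg_sub]
      refine le_trans hii' ?_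
      rw [inv_eq_ppow]; exact ppow_le (by omega)
    have hdec : t₀^m - z = ((ξ:ℚ_[p])^k + a k) +
        (((a₀:ℚ_[p]) * (y - 1)) + (((a₀:ℚ_[p]) - (a₀:ℚ_[p])^(p^s)) + ((a₀:ℚ_[p])^(p^s) - a k))) := by
      rw [ht₀m, hz]; ring
    rw [hdec]
    refine norm_two_le hξk (norm_two_le ?_ (norm_two_le ?_ hiile))
    · rw [norm_mul, ha₀n, one_mul]; exact hy1
    · rw [← norm_neg, neg_sub]; exact hFermA
  -- Hensel 1 : exact m-th root of z
  have hznle : ‖z‖ ≤ 1 := le_of_eq hzn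
  have ht₀le : ‖t₀‖ ≤ 1 := le_of_eq ht₀n
  set zZ : ℤ_[p] := ⟨z, hznle⟩ with hzZ
  set t₀Z : ℤ_[p] := ⟨t₀, ht₀le⟩ with ht₀Z
  set G₁ : Polynomial ℤ_[p] := X^m - C zZ with hG₁
  have hG₁eval : ∀ w : ℤ_[p], G₁.eval w = w^m - zZ := by
    intro w; simp [hG₁]
  have hG₁deriv : G₁.derivative = C ((m:ℤ_[p])) * X^(m-1) := by
    rw [hG₁, derivative_sub, derivative_C, sub_zero, derivative_X_pow]
  have hmn : ‖((m:ℕ) : ℚ_[p])‖ = 1 := norm_natCast_one_of_not_dvd hmd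
  have hG₁cond : ‖G₁.eval t₀Z‖ < ‖G₁.derivative.eval t₀Z‖^2 := by
    have h1 : ‖G₁.eval t₀Z‖ ≤ (p:ℝ)⁻¹ := by
      rw [hG₁eval, PadicInt.norm_def]
      have : ((t₀Z^m - zZ : ℤ_[p]) : ℚ_[p]) = t₀^m - z := by
        push_cast [ht₀Z, hzZ]; rfl
      rw [this]; exact ht₀z
    have h2 : ‖G₁.derivative.eval t₀Z‖ = 1 := by
      rw [hG₁deriv]
      simp only [eval_mul, eval_C, eval_pow, eval_X]
      rw [PadicInt.norm_def]
      have : (((m:ℤ_[p]) * t₀Z^(m-1) : ℤ_[p]) : ℚ_[p]) = (m:ℚ_[p]) * t₀^(m-1) := by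
        push_cast [ht₀Z]; rfl
      rw [this, norm_mul, norm_pow, hmn, ht₀n, one_pow, one_mul]
    rw [h2, one_pow]
    refine lt_of_le_of_lt h1 ?_
    rw [inv_eq_ppow]
    calc (p:ℝ)^(-1:ℤ) < (p:ℝ)^(0:ℤ) := ppow_lt (by omega)
      _ = 1 := by simp
  obtain ⟨tZ, htZ0, -, -, -⟩ := hensels_lemma hG₁cond
  rw [coe_aeval_eq_eval, hG₁eval, sub_eq_zero] at htZ0
  set t := (tZ : ℚ_[p]) with ht
  have htm : t^m = z := by
    rw [ht, ← PadicInt.coe_pow, htZ0, hzZ]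
  have htle : ‖t‖ ≤ 1 := by rw [ht, ← PadicInt.norm_def]; exact tZ.2
  have htn : ‖t‖ = 1 := by
    rcases lt_or_eq_of_le htle with hlt | heq
    · exfalso
      have : ‖t‖^m < 1 := pow_lt_one₀ (norm_nonneg _) hlt hm0
      rw [← norm_pow, htm, hzn] at this
      exact absurd this (lt_irrefl _)
    · exact heq
  -- t^k + a k is very small
  have hodd : Odd (p^s) := Odd.pow (hpp.out.odd_of_ne_two (by omega))
  have htk : ‖t^k + a k‖ ≤ (p:ℝ)^(-(2*(s:ℤ)+1)) := by
    have h1 : t^k = -((a₀:ℚ_[p])^(p^s) * y^(p^s)) := by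
      rw [hkdef, pow_mul, htm, hz, mul_pow, Odd.neg_pow hodd, neg_mul]
    have h2 : t^k + a k = ((a₀:ℚ_[p])^(p^s)) * (v - y^(p^s)) := by
      rw [h1, hakv]; ring
    rw [h2, norm_mul, ha₀pn, one_mul, ← norm_neg, neg_sub]
    exact hy2
  -- Hensel 2 : the full polynomial
  classical
  set aZ : ℕ → ℤ_[p] := fun j => if h : 1 ≤ j ∧ j ≤ k then ⟨a j, haint j h.1 h.2⟩ else 0 with haZ
  have haZc : ∀ j, 1 ≤ j → j ≤ k → ((aZ j : ℤ_[p]) : ℚ_[p]) = a j := by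
    intro j h1 h2
    rw [haZ]
    simp [h1, h2]
  set F : Polynomial ℤ_[p] := X^k + ∑ j ∈ Icc 1 k, C (aZ j) * X^(k-j) with hF
  have hFeval : ∀ w : ℤ_[p], F.eval w = w^k + ∑ j ∈ Icc 1 k, aZ j * w^(k-j) := by
    intro w
    rw [hF, eval_add, eval_pow, eval_X, eval_finset_sum]
    congr 1
    exact Finset.sum_congr rfl (fun j hj => by rw [eval_mul, eval_C, eval_pow, eval_X])
  have hFevalQ : ∀ w : ℤ_[p], ((F.eval w : ℤ_[p]) : ℚ_[p])
      = (w:ℚ_[p])^k + ∑ j ∈ Icc 1 k, a j * (w:ℚ_[p])^(k-j) := by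
    intro w
    rw [hFeval, PadicInt.coe_add, PadicInt.coe_pow, coe_sum_padic]
    congr 1
    refine Finset.sum_congr rfl (fun j hj => ?_)
    obtain ⟨hj1, hj2⟩ := Finset.mem_Icc.1 hj
    rw [PadicInt.coe_mul, PadicInt.coe_pow, haZc j hj1 hj2]
  have hFt : ‖F.eval tZ‖ ≤ (p:ℝ)^(-(2*(s:ℤ)+1)) := by
    rw [PadicInt.norm_def, hFevalQ, ← ht]
    have hd := hsplitZ (fun j => a j * t^(k-j))
    simp only [Nat.sub_self, pow_zero, mul_one] at hd
    have : t^k + ∑ j ∈ Icc 1 k, a j * t^(k-j)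
        = (t^k + a k) + ∑ j ∈ Icc 1 k', a j * t^(k-j) := by
      rw [hd]; ring
    rw [this]
    refine norm_two_le htk (pnorm_sum_le _ (le_of_lt (ppow_pos _)) (fun j hj => ?_))
    obtain ⟨hj1, hj2⟩ := Finset.mem_Icc.1 hj
    rw [norm_mul]
    calc ‖a j‖ * ‖t^(k-j)‖ ≤ (p:ℝ)^(-(2*(s:ℤ)+1)) * 1 := by
          refine mul_le_mul (hsmall' j hj1 (by omega)) ?_ (norm_nonneg _) (le_of_lt (ppow_pos _))
          rw [norm_pow]; exact pow_le_one₀ (norm_nonneg _) htle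
      _ = _ := mul_one _
  have hFderiv : F.derivative = C ((k:ℤ_[p])) * X^(k-1)
      + ∑ j ∈ Icc 1 k, C (aZ j * ((k-j : ℕ) : ℤ_[p])) * X^(k-j-1) := by
    rw [hF, derivative_add, derivative_X_pow, derivative_sum]
    congr 1
    exact Finset.sum_congr rfl (fun j hj => by rw [derivative_C_mul_X_pow])
  have hknorm : ‖((k:ℕ) : ℚ_[p])‖ = (p:ℝ)^(-(s:ℤ)) := by
    rw [hkdef]; exact norm_natCast_k m s hmd
  have hF'cond : ‖F.derivative.eval tZ‖ = (p:ℝ)^(-(s:ℤ)) := by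
    rw [hFderiv]
    rw [eval_add, eval_mul, eval_C, eval_pow, eval_X, eval_finset_sum]
    rw [PadicInt.norm_def, PadicInt.coe_add, PadicInt.coe_mul, PadicInt.coe_pow,
      PadicInt.coe_natCast, coe_sum_padic, ← ht]
    have hA : ‖((k:ℕ):ℚ_[p]) * t^(k-1)‖ = (p:ℝ)^(-(s:ℤ)) := by
      rw [norm_mul, norm_pow, hknorm, htn, one_pow, mul_one]
    have hB : ‖∑ j ∈ Icc 1 k, ((eval tZ (C (aZ j * ((k-j:ℕ):ℤ_[p])) * X^(k-j-1)) : ℤ_[p]) : ℚ_[p])‖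
        ≤ (p:ℝ)^(-(2*(s:ℤ)+1)) := by
      refine pnorm_sum_le _ (le_of_lt (ppow_pos _)) (fun j hj => ?_)
      obtain ⟨hj1, hj2⟩ := Finset.mem_Icc.1 hj
      rw [eval_mul, eval_C, eval_pow, eval_X]
      rw [PadicInt.coe_mul, PadicInt.coe_mul, PadicInt.coe_pow, PadicInt.coe_natCast,
        haZc j hj1 hj2]
      rcases lt_or_eq_of_le hj2 with hlt | heq
      · rw [norm_mul, norm_mul]
        have hn1 : ‖((k-j : ℕ) : ℚ_[p])‖ ≤ 1 := by
          have := Padic.norm_int_le_one (p := p) ((k-j:ℕ) : ℤ)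
          push_cast at this; exact this
        have hn2 : ‖t^(k-j-1)‖ ≤ 1 := by
          rw [norm_pow]; exact pow_le_one₀ (norm_nonneg _) htle
        calc ‖a j‖ * ‖((k-j:ℕ):ℚ_[p])‖ * ‖t^(k-j-1)‖
            ≤ (p:ℝ)^(-(2*(s:ℤ)+1)) * 1 * 1 := by
              refine mul_le_mul (mul_le_mul (hsmall' j hj1 hlt) hn1 (norm_nonneg _)
                (le_of_lt (ppow_pos _))) hn2 (norm_nonneg _) ?_
              positivity
          _ = _ := by ring
      · rw [heq, Nat.sub_self]
        simp
        positivity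
    have hBlt : ‖∑ j ∈ Icc 1 k, ((eval tZ (C (aZ j * ((k-j:ℕ):ℤ_[p])) * X^(k-j-1)) : ℤ_[p]) : ℚ_[p])‖
        < (p:ℝ)^(-(s:ℤ)) :=
      lt_of_le_of_lt hB (ppow_lt (a := -(2*(s:ℤ)+1)) (b := -(s:ℤ)) (by omega))
    rw [Padic.add_eq_max_of_ne (by rw [hA]; exact ne_of_gt hBlt), hA]
    exact max_eq_left (le_of_lt hBlt)
  have hcond2 : ‖F.eval tZ‖ < ‖F.derivative.eval tZ‖^2 := by
    rw [hF'cond]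
    refine lt_of_le_of_lt hFt ?_
    rw [← zpow_natCast ((p:ℝ)^(-(s:ℤ))), ← zpow_mul]
    refine ppow_lt (by push_cast; omega)
  obtain ⟨rZ, hrZ0, -, -, -⟩ := hensels_lemma hcond2
  refine ⟨(rZ : ℚ_[p]), ?_⟩
  rw [← hFevalQ, ← coe_aeval_eq_eval, hrZ0]
  rfl


theorem padic_poly_root_iff (p : ℕ) [Fact p.Prime] (hp : 3 ≤ p)
    (m s k : ℕ) (hm : Nat.Coprime m p) (hkdef : k = m * p ^ s)
    (a : ℕ → ℚ_[p]) (haint : ∀ j, 1 ≤ j → j ≤ k → ‖a j‖ ≤ 1)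
    (hak : ‖a k‖ = 1)
    (hsmall : ∀ j, 1 ≤ j → j < k → ‖a j‖ < (p : ℝ) ^ (-(2 * s : ℤ)))
    (a₀ : ℕ) (ha₀ : 1 ≤ a₀) (ha₀' : a₀ ≤ p - 1)
    (hclose : ‖a k - (a₀ : ℚ_[p])‖ < 1) :
    (∃ x : ℚ_[p], x ^ k + ∑ j ∈ Finset.Icc 1 k, a j * x ^ (k - j) = 0) ↔
      ((∃ ξ : ℕ, 1 ≤ ξ ∧ ξ ≤ p - 1 ∧ ‖(ξ : ℚ_[p]) ^ k + a k‖ < 1) ∧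
        ‖a k - (a₀ : ℚ_[p]) ^ (p ^ s)‖ < (p : ℝ) ^ (-(s : ℤ))) := by
  constructor
  · rintro ⟨x, hx⟩
    exact fwd_dir p hp m s k hm hkdef a haint hak hsmall a₀ ha₀ ha₀' hclose x hx
  · rintro ⟨⟨ξ, h1, h2, h3⟩, hii⟩
    exact bwd_dir p hp m s k hm hkdef a haint hak hsmall a₀ ha₀ ha₀' ξ h1 h2 h3 hii
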